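/- Assume h ≥ 0, r − c > 0, θ + c > 0, and −1 < w ≤ 0, and suppose the common demand distribution has a continuous density f_D with f_D(t) > 0 for all t ≥ 0 (so its CDF F_D is continuous, vanishes on (−∞, 0], is strictly increasing on [0, ∞), and tends to 1). For each initial inventory vector x let F_x(z) = P(D^m(x) ≤ z). Then: (i) for every x there is a unique q(x) ≥ 0 satisfying (θ + c) F_x(q(x)) = (h + r − c)(1 − F_D(q(x))) − h − (θ + c) w; (ii) q(0) ≤ q(x) and F_0(q(0)) ≥ F_x(q(x)) for every x, where 0 denotes the zero initial inventory vector; and (iii) if x_i ≥ y_i for every i then q(x) ≥ q(y) and F_x(q(x)) ≤ F_y(q(y)). -/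

import Mathlib

open MeasureTheory ProbabilityTheory

/-- The effective-demand recursion: `e 1 = d 1` and
`e (i+1) = max (e i) (s i) + d (i+1)`, where `s i = x 1 + ⋯ + x i`. -/
noncomputable def effDemand (d x : ℕ → ℝ) : ℕ → ℝ
  | 0 => 0
  | 1 => d 1
  | (n + 2) => max (effDemand d x (n + 1)) (∑ j ∈ Finset.Icc 1 (n + 1), x j) + d (n + 2)

/-- The CDF of the m-period effective demand: F_x(z) = P(D^m(x) ≤ z). -/
noncomputable def cdfEff {Ω : Type*} [MeasurableSpace Ω] (μ : Measure Ω)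
    (D : ℕ → Ω → ℝ) (x : ℕ → ℝ) (m : ℕ) (z : ℝ) : ℝ :=
  (μ {ω | effDemand (fun j => D j ω) x m ≤ z}).toReal

lemma effDemand_congr (d d' x : ℕ → ℝ) :
    ∀ n, (∀ j, 1 ≤ j → j ≤ n → d j = d' j) → effDemand d x n = effDemand d' x n := by
  intro n
  induction n using Nat.strong_induction_on with
  | _ n ih =>
    match n with
    | 0 => intro _; simp [effDemand]
    | 1 => intro hd; simp [effDemand, hd 1 le_rfl le_rfl]
    | (k+2) =>
      intro hd
      simp only [effDemand]
      rw [ih (k+1) (by omega) (fun j h1 h2 => hd j h1 (by omega)),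
        hd (k+2) (by omega) le_rfl]

lemma effDemand_mono (d x y : ℕ → ℝ) :
    ∀ n, (∀ j, 1 ≤ j → j + 1 ≤ n → y j ≤ x j) → effDemand d y n ≤ effDemand d x n := by
  intro n
  induction n using Nat.strong_induction_on with
  | _ n ih =>
    match n with
    | 0 => intro _; simp [effDemand]
    | 1 => intro _; simp [effDemand]
    | (k+2) =>
      intro hxy
      simp only [effDemand]
      refine add_le_add_left (max_le_max (ih (k+1) (by omega)
        (fun j h1 h2 => hxy j h1 (by omega))) ?_) _
      refine Finset.sum_le_sum fun j hj => ?_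
      simp only [Finset.mem_Icc] at hj
      exact hxy j hj.1 (by omega)

lemma le_effDemand (d x : ℕ → ℝ) :
    ∀ n, 1 ≤ n → (∀ j, 1 ≤ j → j + 1 ≤ n → 0 ≤ x j) → d n ≤ effDemand d x n := by
  intro n hn hx
  match n with
  | 1 => simp [effDemand]
  | (k+2) =>
    simp only [effDemand]
    have h0 : (0:ℝ) ≤ ∑ j ∈ Finset.Icc 1 (k+1), x j := by
      refine Finset.sum_nonneg fun j hj => ?_
      simp only [Finset.mem_Icc] at hj
      exact hx j hj.1 (by omega)
    have := le_max_right (effDemand d x (k+1)) (∑ j ∈ Finset.Icc 1 (k+1), x j)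
    linarith

lemma measurable_effDemand {α : Type*} [MeasurableSpace α] (g : ℕ → α → ℝ)
    (hg : ∀ j, Measurable (g j)) (x : ℕ → ℝ) :
    ∀ n, Measurable (fun a => effDemand (fun j => g j a) x n) := by
  intro n
  induction n using Nat.strong_induction_on with
  | _ n ih =>
    match n with
    | 0 => simpa [effDemand] using measurable_const
    | 1 => simpa [effDemand] using hg 1
    | (k+2) =>
      simp only [effDemand]
      exact ((ih (k+1) (by omega)).max measurable_const).add (hg (k+2))

lemma cdf_cont_of_no_atoms (ν : Measure ℝ) [IsProbabilityMeasure ν]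
    (hν : ∀ z : ℝ, ν {z} = 0) : Continuous fun q => (ν (Set.Iic q)).toReal := by
  have hfun : (fun q => (ν (Set.Iic q)).toReal) = (ProbabilityTheory.cdf ν : ℝ → ℝ) := by
    funext q; exact (ProbabilityTheory.cdf_eq_real ν q).symm
  rw [hfun, continuous_iff_continuousAt]
  intro z
  set f := ProbabilityTheory.cdf ν with hf
  rw [f.mono.continuousAt_iff_leftLim_eq_rightLim]
  have hright : Function.rightLim (f : ℝ → ℝ) z = f z :=
    (f.mono.continuousWithinAt_Ioi_iff_rightLim_eq).mp
      ((f.right_continuous z).mono Set.Ioi_subset_Ici_self)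
  have hleft : Function.leftLim (f : ℝ → ℝ) z = f z := by
    have hm : f.measure {z} = ν {z} := by rw [hf, ProbabilityTheory.measure_cdf]
    have hs := f.measure_singleton z
    rw [hm, hν z] at hs
    have h1 : f z - Function.leftLim (f : ℝ → ℝ) z ≤ 0 := by
      by_contra hc
      push_neg at hc
      rw [eq_comm, ENNReal.ofReal_eq_zero] at hs
      linarith
    have h2 : Function.leftLim (f : ℝ → ℝ) z ≤ f z := f.mono.leftLim_le le_rfl
    linarith
  rw [hleft, hright]

lemma add_indep_no_atom {Ω : Type*} [MeasurableSpace Ω] (μ : Measure Ω) [IsProbabilityMeasure μ]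
    (X Y : Ω → ℝ) (hX : Measurable X) (hY : Measurable Y)
    (hXY : IndepFun X Y μ) (hat : ∀ z : ℝ, μ.map Y {z} = 0) (z : ℝ) :
    μ {ω | X ω + Y ω = z} = 0 := by
  have hmap := (indepFun_iff_map_prod_eq_prod_map_map hX.aemeasurable hY.aemeasurable).mp hXY
  have hms : MeasurableSet {p : ℝ × ℝ | p.1 + p.2 = z} :=
    (measurable_fst.add measurable_snd) (measurableSet_singleton z)
  have hset : {ω | X ω + Y ω = z} = (fun ω => (X ω, Y ω)) ⁻¹' {p : ℝ × ℝ | p.1 + p.2 = z} := rfl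
  rw [hset, ← Measure.map_apply (hX.prodMk hY) hms, hmap, Measure.prod_apply hms]
  have hzero : ∀ a : ℝ, (μ.map Y) (Prod.mk a ⁻¹' {p : ℝ × ℝ | p.1 + p.2 = z}) = 0 := by
    intro a
    have hpre : Prod.mk a ⁻¹' {p : ℝ × ℝ | p.1 + p.2 = z} = {z - a} := by
      ext b
      simp only [Set.mem_preimage, Set.mem_setOf_eq, Set.mem_singleton_iff]
      constructor <;> intro hb <;> linarith
    rw [hpre]
    exact hat _
  simp only [hzero, lintegral_zero]

/-- With h ≥ 0, r − c > 0, θ + c > 0, −1 < w ≤ 0 and iid nonnegative demands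
having a continuous density f_D positive on [0, ∞): (i) for every nonnegative initial
inventory vector x there is a unique q(x) ≥ 0 satisfying
(θ + c) F_x(q(x)) = (h + r − c)(1 − F_D(q(x))) − h − (θ + c) w;
(ii) q(0) ≤ q(x) and F_0(q(0)) ≥ F_x(q(x)) for every x; (iii) if x ≥ y componentwise
then q(x) ≥ q(y) and F_x(q(x)) ≤ F_y(q(y)). -/
theorem stmt_16 {Ω : Type*} [MeasurableSpace Ω] (μ : Measure Ω) [IsProbabilityMeasure μ]
    (m : ℕ) (hm : 1 ≤ m)
    (D : ℕ → Ω → ℝ) (hDmeas : ∀ i, Measurable (D i))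
    (hindep : iIndepFun D μ)
    (hident : ∀ i, μ.map (D i) = μ.map (D 1))
    (hDnonneg : ∀ i, ∀ᵐ ω ∂μ, 0 ≤ D i ω)
    (fD : ℝ → ℝ) (hfD_cont : Continuous fD) (hfD_pos : ∀ t, 0 ≤ t → 0 < fD t)
    (hfD : μ.map (D 1) = (volume : Measure ℝ).withDensity (fun t => ENNReal.ofReal (fD t)))
    (h r c θ w : ℝ) (hh : 0 ≤ h) (hrc : 0 < r - c) (hθc : 0 < θ + c)
    (hw1 : -1 < w) (hw2 : w ≤ 0) :
    ∃ Q : (ℕ → ℝ) → ℝ,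
      -- (i) existence and uniqueness of the nonnegative solution of the optimality condition
      (∀ x : ℕ → ℝ, (∀ i, 1 ≤ i → i ≤ m - 1 → 0 ≤ x i) →
        (0 ≤ Q x ∧
          (θ + c) * cdfEff μ D x m (Q x)
            = (h + r - c) * (1 - (μ {ω | D 1 ω ≤ Q x}).toReal) - h - (θ + c) * w ∧
          ∀ q' : ℝ, 0 ≤ q' →
            (θ + c) * cdfEff μ D x m q'
              = (h + r - c) * (1 - (μ {ω | D 1 ω ≤ q'}).toReal) - h - (θ + c) * w →
            q' = Q x)) ∧
      -- (ii) bounds relative to the zero initial inventory vector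
      (∀ x : ℕ → ℝ, (∀ i, 1 ≤ i → i ≤ m - 1 → 0 ≤ x i) →
        Q (fun _ => 0) ≤ Q x ∧
        cdfEff μ D x m (Q x) ≤ cdfEff μ D (fun _ => 0) m (Q (fun _ => 0))) ∧
      -- (iii) componentwise monotonicity
      (∀ x y : ℕ → ℝ, (∀ i, 1 ≤ i → i ≤ m - 1 → 0 ≤ x i) →
        (∀ i, 1 ≤ i → i ≤ m - 1 → 0 ≤ y i) →
        (∀ i, 1 ≤ i → i ≤ m - 1 → y i ≤ x i) →
        Q y ≤ Q x ∧ cdfEff μ D x m (Q x) ≤ cdfEff μ D y m (Q y)) := by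
  classical
  haveI hprobν : IsProbabilityMeasure (μ.map (D 1)) :=
    Measure.isProbabilityMeasure_map (hDmeas 1).aemeasurable
  -- the law of each demand has no atoms
  have hν_atom : ∀ z : ℝ, (μ.map (D 1)) {z} = 0 := by
    intro z
    rw [hfD, withDensity_apply _ (measurableSet_singleton z)]
    exact setLIntegral_measure_zero _ _ (measure_singleton z)
  have hD_atom : ∀ i (z : ℝ), μ {ω | D i ω = z} = 0 := by
    intro i z
    have hpre : {ω | D i ω = z} = D i ⁻¹' {z} := rfl
    rw [hpre, ← Measure.map_apply (hDmeas i) (measurableSet_singleton z), hident i]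
    exact hν_atom z
  have hD_le0 : ∀ i, μ {ω | D i ω ≤ 0} = 0 := by
    intro i
    have h1 : μ {ω | ¬ 0 ≤ D i ω} = 0 := ae_iff.mp (hDnonneg i)
    have hsub : {ω | D i ω ≤ 0} ⊆ {ω | ¬ 0 ≤ D i ω} ∪ {ω | D i ω = 0} := by
      intro ω hω
      have hω' : D i ω ≤ 0 := hω
      rcases lt_or_eq_of_le hω' with h' | h'
      · exact Or.inl (by simp only [Set.mem_setOf_eq, not_le]; exact h')
      · exact Or.inr h'
    exact measure_mono_null hsub (measure_union_null h1 (hD_atom i 0))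
  -- effective demand: measurability
  have hEmeas : ∀ x : ℕ → ℝ, Measurable fun ω => effDemand (fun j => D j ω) x m :=
    fun x => measurable_effDemand D hDmeas x m
  haveI hlawprob : ∀ x : ℕ → ℝ,
      IsProbabilityMeasure (μ.map fun ω => effDemand (fun j => D j ω) x m) :=
    fun x => Measure.isProbabilityMeasure_map (hEmeas x).aemeasurable
  -- atomlessness of the law of the effective demand
  have hE_atom : ∀ (x : ℕ → ℝ) (z : ℝ), μ {ω | effDemand (fun j => D j ω) x m = z} = 0 := by
    intro x z
    match m, hm with
    | 1, _ =>
      have hpre : {ω | effDemand (fun j => D j ω) x 1 = z} = {ω | D 1 ω = z} := by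
        ext ω; simp [effDemand]
      rw [hpre]
      exact hD_atom 1 z
    | (n+2), _ =>
      set S : Finset ℕ := Finset.Icc 1 (n+1) with hS
      set T : Finset ℕ := {n+2} with hT
      have hST : Disjoint S T := by
        rw [Finset.disjoint_singleton_right, hS, Finset.mem_Icc]
        omega
      set s0 : ℝ := ∑ j ∈ Finset.Icc 1 (n+1), x j with hs0
      set φ : (S → ℝ) → ℝ := fun v =>
        max (effDemand (fun j => if hj : j ∈ S then v ⟨j, hj⟩ else 0) x (n+1)) s0 with hφ
      have hφm : Measurable φ := by
        refine Measurable.max ?_ measurable_const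
        refine measurable_effDemand (fun j (v : S → ℝ) => if hj : j ∈ S then v ⟨j, hj⟩ else 0)
          (fun j => ?_) x (n+1)
        by_cases hj : j ∈ S
        · simpa [hj] using measurable_pi_apply (⟨j, hj⟩ : S)
        · simpa [hj] using measurable_const
      have hmem : (n+2) ∈ T := by rw [hT]; exact Finset.mem_singleton_self _
      have hψm : Measurable fun v : T → ℝ => v ⟨n+2, hmem⟩ := measurable_pi_apply _
      have hindepZ : IndepFun
          (fun ω => max (effDemand (fun j => D j ω) x (n+1)) s0) (D (n+2)) μ := by
        have hcomp := (hindep.indepFun_finset S T hST hDmeas).comp hφm hψm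
        have he1 : (φ ∘ fun ω (i : S) => D i ω)
            = fun ω => max (effDemand (fun j => D j ω) x (n+1)) s0 := by
          funext ω
          simp only [Function.comp, hφ]
          congr 1
          refine effDemand_congr _ _ _ (n+1) fun j h1 h2 => ?_
          have hj : j ∈ S := by rw [hS, Finset.mem_Icc]; omega
          simp [hj]
        have he2 : ((fun v : T → ℝ => v ⟨n+2, hmem⟩) ∘ fun ω (i : T) => D i ω) = D (n+2) := rfl
        rw [he1, he2] at hcomp
        exact hcomp
      have hset : {ω | effDemand (fun j => D j ω) x (n+2) = z}
          = {ω | (max (effDemand (fun j => D j ω) x (n+1)) s0) + D (n+2) ω = z} := by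
        ext ω
        simp only [Set.mem_setOf_eq, effDemand, hs0]
      rw [hset]
      refine add_indep_no_atom μ _ _
        ((measurable_effDemand D hDmeas x (n+1)).max measurable_const)
        (hDmeas (n+2)) hindepZ (fun z' => ?_) z
      rw [hident (n+2)]
      exact hν_atom z'
  -- rewriting the cdfs through the laws
  have hcdf_eq : ∀ (x : ℕ → ℝ) (q : ℝ), cdfEff μ D x m q
      = ((μ.map fun ω => effDemand (fun j => D j ω) x m) (Set.Iic q)).toReal := by
    intro x q
    rw [cdfEff, Measure.map_apply (hEmeas x) measurableSet_Iic]
    rfl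
  have hFD_eq : ∀ q : ℝ, (μ {ω | D 1 ω ≤ q}).toReal = ((μ.map (D 1)) (Set.Iic q)).toReal := by
    intro q
    rw [Measure.map_apply (hDmeas 1) measurableSet_Iic]
    rfl
  -- continuity
  have hFcont : ∀ x : ℕ → ℝ, Continuous (cdfEff μ D x m) := by
    intro x
    haveI := hlawprob x
    have hat : ∀ z : ℝ, (μ.map fun ω => effDemand (fun j => D j ω) x m) {z} = 0 := by
      intro z
      rw [Measure.map_apply (hEmeas x) (measurableSet_singleton z)]
      exact hE_atom x z
    have h1 := cdf_cont_of_no_atoms _ hat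
    have h2 : cdfEff μ D x m
        = fun q => ((μ.map fun ω => effDemand (fun j => D j ω) x m) (Set.Iic q)).toReal :=
      funext (hcdf_eq x)
    rw [h2]
    exact h1
  have hFDcont : Continuous fun q : ℝ => (μ {ω | D 1 ω ≤ q}).toReal := by
    have h1 := cdf_cont_of_no_atoms _ hν_atom
    have h2 : (fun q : ℝ => (μ {ω | D 1 ω ≤ q}).toReal)
        = fun q => ((μ.map (D 1)) (Set.Iic q)).toReal := funext hFD_eq
    rw [h2]
    exact h1
  -- monotonicity of cdfs in the argument
  have hFmono : ∀ (x : ℕ → ℝ) {a b : ℝ}, a ≤ b → cdfEff μ D x m a ≤ cdfEff μ D x m b := by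
    intro x a b hab
    refine ENNReal.toReal_mono (measure_ne_top μ _) (measure_mono fun ω hω => ?_)
    exact le_trans hω hab
  have hFDmono : ∀ {a b : ℝ}, a ≤ b →
      (μ {ω | D 1 ω ≤ a}).toReal ≤ (μ {ω | D 1 ω ≤ b}).toReal := by
    intro a b hab
    refine ENNReal.toReal_mono (measure_ne_top μ _) (measure_mono fun ω hω => ?_)
    exact le_trans hω hab
  -- monotonicity of cdfs in the initial inventory
  have hFmono_x : ∀ x y : ℕ → ℝ, (∀ i, 1 ≤ i → i ≤ m - 1 → y i ≤ x i) →
      ∀ q : ℝ, cdfEff μ D x m q ≤ cdfEff μ D y m q := by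
    intro x y hle q
    refine ENNReal.toReal_mono (measure_ne_top μ _) (measure_mono fun ω hω => ?_)
    refine le_trans (effDemand_mono (fun j => D j ω) x y m fun j h1 h2 => ?_) hω
    exact hle j h1 (by omega)
  -- values at 0
  have hF0 : ∀ x : ℕ → ℝ, (∀ i, 1 ≤ i → i ≤ m - 1 → 0 ≤ x i) → cdfEff μ D x m 0 = 0 := by
    intro x hx
    have hsub : {ω | effDemand (fun j => D j ω) x m ≤ 0} ⊆ {ω | D m ω ≤ 0} := by
      intro ω hω
      have := le_effDemand (fun j => D j ω) x m hm fun j h1 h2 => hx j h1 (by omega)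
      exact le_trans this hω
    rw [cdfEff, measure_mono_null hsub (hD_le0 m)]
    rfl
  have hFD0 : (μ {ω | D 1 ω ≤ 0}).toReal = 0 := by rw [hD_le0 1]; rfl
  -- limits at infinity
  have hFtop : ∀ x : ℕ → ℝ, Filter.Tendsto (cdfEff μ D x m) Filter.atTop (nhds 1) := by
    intro x
    haveI := hlawprob x
    have h1 := tendsto_measure_Iic_atTop (μ.map fun ω => effDemand (fun j => D j ω) x m)
    rw [measure_univ] at h1
    have h2 := (ENNReal.tendsto_toReal (by norm_num : (1:ENNReal) ≠ ⊤)).comp h1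
    rw [ENNReal.toReal_one] at h2
    have h3 : cdfEff μ D x m
        = fun q => ((μ.map fun ω => effDemand (fun j => D j ω) x m) (Set.Iic q)).toReal :=
      funext (hcdf_eq x)
    rw [h3]
    exact h2
  have hFDtop : Filter.Tendsto (fun q : ℝ => (μ {ω | D 1 ω ≤ q}).toReal)
      Filter.atTop (nhds 1) := by
    have h1 := tendsto_measure_Iic_atTop (μ.map (D 1))
    rw [measure_univ] at h1
    have h2 := (ENNReal.tendsto_toReal (by norm_num : (1:ENNReal) ≠ ⊤)).comp h1
    rw [ENNReal.toReal_one] at h2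
    have h3 : (fun q : ℝ => (μ {ω | D 1 ω ≤ q}).toReal)
        = fun q => ((μ.map (D 1)) (Set.Iic q)).toReal := funext hFD_eq
    rw [h3]
    exact h2
  -- strict monotonicity of the demand cdf on [0, ∞)
  have hFDstrict : ∀ a b : ℝ, 0 ≤ a → a < b →
      (μ {ω | D 1 ω ≤ a}).toReal < (μ {ω | D 1 ω ≤ b}).toReal := by
    intro a b ha hab
    rw [hFD_eq a, hFD_eq b]
    have hIoc : (μ.map (D 1)) (Set.Ioc a b) ≠ 0 := by
      intro h0
      rw [hfD, withDensity_apply _ measurableSet_Ioc,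
        lintegral_eq_zero_iff hfD_cont.measurable.ennreal_ofReal] at h0
      have hae : ∀ᵐ t ∂(volume.restrict (Set.Ioc a b)), ENNReal.ofReal (fD t) = 0 := h0
      have hFalse : ∀ᵐ t ∂(volume.restrict (Set.Ioc a b)), False := by
        filter_upwards [hae, ae_restrict_mem measurableSet_Ioc] with t h1 ht
        exact (ne_of_gt (ENNReal.ofReal_pos.mpr (hfD_pos t (ha.trans ht.1.le)))) h1
      have huniv := ae_iff.mp hFalse
      simp only [not_false_eq_true, Set.setOf_true] at huniv
      rw [Measure.restrict_apply_univ, Real.volume_Ioc] at huniv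
      rw [ENNReal.ofReal_eq_zero] at huniv
      linarith
    have hsplit : (μ.map (D 1)) (Set.Iic b)
        = (μ.map (D 1)) (Set.Iic a) + (μ.map (D 1)) (Set.Ioc a b) := by
      rw [← Set.Iic_union_Ioc_eq_Iic hab.le,
        measure_union (Set.Iic_disjoint_Ioc le_rfl) measurableSet_Ioc]
    rw [hsplit, ENNReal.toReal_add (measure_ne_top _ _) (measure_ne_top _ _)]
    have hpos := ENNReal.toReal_pos hIoc (measure_ne_top _ _)
    linarith
  -- notation for the right-hand side of the optimality equation
  set RHS : ℝ → ℝ := fun q => (h + r - c) * (1 - (μ {ω | D 1 ω ≤ q}).toReal) - h - (θ + c) * w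
    with hRHSdef
  have hRHS_anti : ∀ {a b : ℝ}, a ≤ b → RHS b ≤ RHS a := by
    intro a b hab
    have h1 := hFDmono hab
    simp only [hRHSdef]
    nlinarith
  -- strict monotonicity of the gap function on [0, ∞)
  have hGstrict : ∀ (x : ℕ → ℝ) (a b : ℝ), 0 ≤ a → a < b →
      (θ + c) * cdfEff μ D x m a - RHS a < (θ + c) * cdfEff μ D x m b - RHS b := by
    intro x a b ha hab
    have h1 := hFmono x hab.le
    have h2 := hFDstrict a b ha hab
    simp only [hRHSdef]
    nlinarith
  -- existence of a root
  have hroot : ∀ x : ℕ → ℝ, (∀ i, 1 ≤ i → i ≤ m - 1 → 0 ≤ x i) →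
      ∃ q : ℝ, 0 ≤ q ∧ (θ + c) * cdfEff μ D x m q = RHS q := by
    intro x hx
    have hGcont : Continuous fun q => (θ + c) * cdfEff μ D x m q - RHS q := by
      refine (continuous_const.mul (hFcont x)).sub ?_
      simp only [hRHSdef]
      exact ((continuous_const.mul (continuous_const.sub hFDcont)).sub
        continuous_const).sub continuous_const
    have hG0 : (θ + c) * cdfEff μ D x m 0 - RHS 0 ≤ 0 := by
      have hwn : (θ + c) * w ≤ 0 := mul_nonpos_of_nonneg_of_nonpos hθc.le hw2
      simp only [hRHSdef, hF0 x hx, hFD0]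
      nlinarith
    set L : ℝ := (θ + c) * 1 - ((h + r - c) * (1 - 1) - h - (θ + c) * w) with hL
    have hLpos : 0 < L := by
      have := mul_pos hθc (show (0:ℝ) < 1 + w by linarith)
      simp only [hL]
      nlinarith
    have hGtop : Filter.Tendsto (fun q => (θ + c) * cdfEff μ D x m q - RHS q)
        Filter.atTop (nhds L) := by
      simp only [hRHSdef, hL]
      exact (Filter.Tendsto.const_mul _ (hFtop x)).sub
        (((Filter.Tendsto.const_mul _ (tendsto_const_nhds.sub hFDtop)).sub
          tendsto_const_nhds).sub tendsto_const_nhds)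
    obtain ⟨M, hM⟩ := ((hGtop.eventually (eventually_gt_nhds hLpos)).and
      (Filter.eventually_ge_atTop (0:ℝ))).exists
    obtain ⟨hGM, hM0⟩ := hM
    have h0mem : (0:ℝ) ∈ Set.Icc ((θ + c) * cdfEff μ D x m 0 - RHS 0)
        ((θ + c) * cdfEff μ D x m M - RHS M) := ⟨hG0, hGM.le⟩
    obtain ⟨q, hqmem, hGq⟩ := intermediate_value_Icc hM0 hGcont.continuousOn h0mem
    have hGq' : (θ + c) * cdfEff μ D x m q - RHS q = 0 := hGq
    exact ⟨q, hqmem.1, by linarith⟩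
  -- uniqueness of roots
  have huniq : ∀ (x : ℕ → ℝ) (a b : ℝ), 0 ≤ a → 0 ≤ b →
      (θ + c) * cdfEff μ D x m a = RHS a → (θ + c) * cdfEff μ D x m b = RHS b → a = b := by
    intro x a b ha hb hea heb
    rcases lt_trichotomy a b with hab | hab | hab
    · have := hGstrict x a b ha hab
      rw [hea, heb] at this
      simp at this
    · exact hab
    · have := hGstrict x b a hb hab
      rw [hea, heb] at this
      simp at this
  -- the key comparison
  have hkey : ∀ (x y : ℕ → ℝ) (hx : ∀ i, 1 ≤ i → i ≤ m - 1 → 0 ≤ x i)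
      (hy : ∀ i, 1 ≤ i → i ≤ m - 1 → 0 ≤ y i),
      (∀ i, 1 ≤ i → i ≤ m - 1 → y i ≤ x i) →
      (hroot y hy).choose ≤ (hroot x hx).choose ∧
        cdfEff μ D x m (hroot x hx).choose ≤ cdfEff μ D y m (hroot y hy).choose := by
    intro x y hx hy hle
    obtain ⟨hqx0, hqxeq⟩ := (hroot x hx).choose_spec
    obtain ⟨hqy0, hqyeq⟩ := (hroot y hy).choose_spec
    have hqle : (hroot y hy).choose ≤ (hroot x hx).choose := by
      by_contra hc
      push_neg at hc
      have hFle := hFmono_x x y hle (hroot x hx).choose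
      have h1 : 0 ≤ (θ + c) * cdfEff μ D y m (hroot x hx).choose - RHS (hroot x hx).choose := by
        nlinarith
      have h2 := hGstrict y (hroot x hx).choose (hroot y hy).choose hqx0 hc
      rw [hqyeq] at h2
      simp at h2
      linarith
    refine ⟨hqle, ?_⟩
    have hR := hRHS_anti hqle
    have hfin : (θ + c) * cdfEff μ D x m (hroot x hx).choose
        ≤ (θ + c) * cdfEff μ D y m (hroot y hy).choose := by linarith
    exact le_of_mul_le_mul_left hfin hθc
  -- assemble
  refine ⟨fun x => if hx : (∀ i, 1 ≤ i → i ≤ m - 1 → 0 ≤ x i)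
    then (hroot x hx).choose else 0, ?_, ?_, ?_⟩
  · intro x hx
    simp only [dif_pos hx]
    obtain ⟨hq0, hqeq⟩ := (hroot x hx).choose_spec
    refine ⟨hq0, ?_, ?_⟩
    · simpa only [hRHSdef] using hqeq
    · intro q' hq' heq
      exact huniq x q' (hroot x hx).choose hq' hq0 (by simp only [hRHSdef]; exact heq) hqeq
  · intro x hx
    have hy : ∀ i, 1 ≤ i → i ≤ m - 1 → (0:ℝ) ≤ (fun _ => (0:ℝ)) i := fun _ _ _ => le_rfl
    have hthis := hkey x (fun _ => 0) hx hy (fun i h1 h2 => hx i h1 h2)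
    simp only [dif_pos hx, dif_pos hy]
    exact hthis
  · intro x y hx hy hle
    have hthis := hkey x y hx hy hle
    simp only [dif_pos hx, dif_pos hy]
    exact hthis
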